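/- arXiv:2310.02968 — 3 statements merged into one kernel-verified Lean document; each statement's English description precedes it below -/
import Mathlib

section
/- Assume $\tilde\lambda_k \leq C k^{-1-2\tilde\alpha}$ for all $k \geq 1$ with constants $C, \tilde\alpha > 0$, and let $g \in \mathcal{S}(\alpha, R)$. Choosing the threshold $K = \lceil (nm)^{1/(1+2\alpha)} \rceil$, the projection estimator $\tilde g^K$ (as in the Gaussian sequence model with noise variances $m^{-1}(\tilde\lambda_k + n^{-1})$) satisfies $\sup_{g \in \mathcal{S}(\alpha,R)} \mathbb{E}_g\|\tilde g^K - g\|_{\ell^2}^2 \leq C' \big( m^{-1} + (nm)^{-2\alpha/(1+2\alpha)} \big)$ for a constant $C'$ depending only on $C, \tilde\alpha, \alpha, R$. -/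
open MeasureTheory ProbabilityTheory Real
open scoped NNReal

lemma gauss_sq_int_one : Integrable (fun x : ℝ => x ^ 2) (gaussianReal 0 1) := by
  rw [gaussianReal_of_var_ne_zero 0 one_ne_zero]
  rw [integrable_withDensity_iff (measurable_gaussianPDF 0 1)
    (ae_of_all _ fun x => ENNReal.ofReal_lt_top)]
  have h := (integrable_rpow_mul_exp_neg_mul_sq (by norm_num : (0:ℝ) < 1/2)
      (by norm_num : (-1:ℝ) < 2)).const_mul ((√(2 * π * ((1:ℝ≥0):ℝ)))⁻¹)
  refine h.congr (ae_of_all _ fun x => ?_)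
  simp only [gaussianPDF_def]
  rw [ENNReal.toReal_ofReal (gaussianPDFReal_nonneg _ _ _), gaussianPDFReal]
  have h2 : x ^ (2:ℝ) = x ^ (2:ℕ) := by
    rw [← Real.rpow_natCast x 2]; norm_num
  rw [h2, show -(x - 0)^2/(2 * ((1:ℝ≥0):ℝ)) = -(1/2) * x ^ (2:ℕ) by push_cast; ring]
  ring

lemma gauss_map_sqrt {v : ℝ≥0} :
    (gaussianReal 0 1).map (fun x => Real.sqrt v * x) = gaussianReal 0 v := by
  have h := gaussianReal_map_const_mul (μ := 0) (v := 1) (Real.sqrt v)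
  have h2 : (⟨(Real.sqrt v) ^ 2, sq_nonneg _⟩ : ℝ≥0) * 1 = v := by
    ext
    simp [Real.sq_sqrt v.2]
  rw [mul_zero] at h
  convert h using 2
  exact h2.symm

lemma gauss_sq_int (v : ℝ≥0) : Integrable (fun x : ℝ => x ^ 2) (gaussianReal 0 v) := by
  rw [← gauss_map_sqrt (v := v)]
  rw [integrable_map_measure (continuous_pow 2).measurable.aestronglyMeasurable
    (measurable_const_mul _).aemeasurable]
  have : ((fun x : ℝ => x ^ 2) ∘ fun x => Real.sqrt v * x)
      = fun x : ℝ => ((v : ℝ)) * x ^ 2 := by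
    funext x
    simp [Function.comp, mul_pow, Real.sq_sqrt v.2]
  rw [this]
  exact gauss_sq_int_one.const_mul _

lemma gauss_sq_moment (v : ℝ≥0) :
    ∫ x, x ^ 2 ∂gaussianReal 0 v = (v : ℝ) * ∫ x, x ^ 2 ∂gaussianReal 0 1 := by
  rw [← gauss_map_sqrt (v := v),
    integral_map (measurable_const_mul _).aemeasurable
      (continuous_pow 2).measurable.aestronglyMeasurable]
  simp [mul_pow, Real.sq_sqrt v.2, integral_const_mul]

set_option maxHeartbeats 1000000 in
/-- With `λ̃ₖ ≤ C k^(-1-2ᾱ)` and threshold `K = ⌈(nm)^(1/(1+2α))⌉`, the projection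
estimator in the Gaussian sequence model attains the rate `m⁻¹ + (nm)^(-2α/(1+2α))`
uniformly over the Sobolev ellipsoid (coefficients indexed from 1, Lean index `k` is
coefficient `k+1`); the constant `C'` depends only on `C, ᾱ, α, R`. -/
theorem projection_estimator_rate (C tα α R : ℝ) (hC : 0 < C) (htα : 0 < tα)
    (hα : 0 < α) (hR : 0 < R) :
    ∃ C' : ℝ, 0 < C' ∧
      ∀ (n m : ℕ), 1 ≤ n → 1 ≤ m →
      ∀ (tlam : ℕ → ℝ), (∀ k, 0 < tlam k) →
      (∀ k : ℕ, 1 ≤ k → tlam (k - 1) ≤ C * (k : ℝ) ^ (-1 - 2 * tα)) →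
      ∀ (Ω : Type) (_ : MeasurableSpace Ω) (μ : Measure Ω), IsProbabilityMeasure μ →
      ∀ (ε : ℕ → Ω → ℝ), (∀ k, Measurable (ε k)) →
      iIndepFun ε μ →
      (∀ k, μ.map (ε k) =
        gaussianReal 0 (((m : ℝ)⁻¹ * (tlam k + (n : ℝ)⁻¹)).toNNReal)) →
      ∀ (g : ℕ → ℝ),
      Summable (fun k => g k ^ 2 * ((k + 1 : ℕ) : ℝ) ^ (2 * α)) →
      (∑' k, g k ^ 2 * ((k + 1 : ℕ) : ℝ) ^ (2 * α)) ≤ R ^ 2 →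
      (∫ ω, ∑' k,
          ((if k < ⌈(((n * m : ℕ) : ℝ)) ^ (1 / (1 + 2 * α))⌉₊ then g k + ε k ω else 0)
            - g k) ^ 2 ∂μ) ≤
        C' * ((m : ℝ)⁻¹ + ((n * m : ℕ) : ℝ) ^ (-(2 * α) / (1 + 2 * α))) := by
  classical
  set M : ℝ := ∫ x, x ^ 2 ∂gaussianReal 0 1 with hMdef
  have hM0 : 0 ≤ M := integral_nonneg fun x => sq_nonneg x
  have hS : Summable (fun k : ℕ => ((k + 1 : ℕ) : ℝ) ^ (-1 - 2 * tα)) := by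
    have h := Real.summable_nat_rpow.mpr (show -1 - 2 * tα < -1 by linarith)
    exact (summable_nat_add_iff 1).mpr h
  set S : ℝ := ∑' k : ℕ, ((k + 1 : ℕ) : ℝ) ^ (-1 - 2 * tα) with hSdef
  have hS0 : 0 ≤ S := tsum_nonneg fun k => Real.rpow_nonneg (by positivity) _
  have hC'pos : 0 < M * C * S + 2 * M + R ^ 2 + 1 := by
    nlinarith [mul_nonneg (mul_nonneg hM0 hC.le) hS0, sq_nonneg R]
  refine ⟨M * C * S + 2 * M + R ^ 2 + 1, hC'pos, ?_⟩
  intro n m hn hm tlam htlam htlamle Ω mΩ μ hμ ε hε hindep hmap g hsum hsob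
  haveI : IsProbabilityMeasure μ := hμ
  set N : ℝ := ((n * m : ℕ) : ℝ) with hNdef
  have hN1 : (1:ℝ) ≤ N := by
    rw [hNdef]
    exact_mod_cast Nat.one_le_iff_ne_zero.mpr (Nat.mul_pos hn hm).ne'
  have hN0 : (0:ℝ) < N := lt_of_lt_of_le one_pos hN1
  have hα' : (0:ℝ) < 1 + 2 * α := by linarith
  set x : ℝ := N ^ (1 / (1 + 2 * α)) with hxdef
  set K : ℕ := ⌈x⌉₊ with hKdef
  have hx1 : (1:ℝ) ≤ x := Real.one_le_rpow hN1 (by positivity)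
  have hx0 : (0:ℝ) < x := lt_of_lt_of_le one_pos hx1
  set rate : ℝ := N ^ (-(2 * α) / (1 + 2 * α)) with hratedef
  have hrate0 : (0:ℝ) ≤ rate := Real.rpow_nonneg hN0.le _
  have hxK : x ≤ (K : ℝ) := Nat.le_ceil x
  have hK2x : (K : ℝ) ≤ 2 * x := by
    have := Nat.ceil_lt_add_one hx0.le
    have : (K : ℝ) < x + 1 := this
    linarith
  -- variances
  set v : ℕ → ℝ := fun k => (m : ℝ)⁻¹ * (tlam k + (n : ℝ)⁻¹) with hvdef
  have hv0 : ∀ k, 0 < v k := by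
    intro k
    have hm0 : (0:ℝ) < (m:ℝ) := by exact_mod_cast hm
    have hn0 : (0:ℝ) < (n:ℝ) := by exact_mod_cast hn
    have := htlam k
    positivity
  -- second moments of the noise
  have hmom : ∀ k, ∫ ω, (ε k ω) ^ 2 ∂μ = v k * M := by
    intro k
    have h1 : ∫ y, y ^ 2 ∂(μ.map (ε k)) = ∫ ω, (ε k ω) ^ 2 ∂μ :=
      integral_map (hε k).aemeasurable (continuous_pow 2).measurable.aestronglyMeasurable
    rw [← h1, hmap k, gauss_sq_moment, Real.coe_toNNReal _ (hv0 k).le]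
  have hint : ∀ k, Integrable (fun ω => (ε k ω) ^ 2) μ := by
    intro k
    have h := gauss_sq_int (((m : ℝ)⁻¹ * (tlam k + (n : ℝ)⁻¹)).toNNReal)
    rw [← hmap k] at h
    exact (integrable_map_measure (continuous_pow 2).measurable.aestronglyMeasurable
      (hε k).aemeasurable).mp h
  -- summability of g²
  have hone_le : ∀ k : ℕ, (1:ℝ) ≤ ((k + 1 : ℕ) : ℝ) ^ (2 * α) := by
    intro k
    refine Real.one_le_rpow ?_ (by positivity)
    exact_mod_cast Nat.one_le_iff_ne_zero.mpr (Nat.succ_ne_zero k)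
  have hg2 : Summable (fun k => g k ^ 2) := by
    refine hsum.of_nonneg_of_le (fun k => sq_nonneg _) (fun k => ?_)
    exact le_mul_of_one_le_right (sq_nonneg _) (hone_le k)
  -- pointwise identity for the loss
  have hpt : ∀ ω, (∑' k, ((if k < K then g k + ε k ω else 0) - g k) ^ 2)
      = (∑ k ∈ Finset.range K, ((ε k ω) ^ 2 - g k ^ 2)) + ∑' k, g k ^ 2 := by
    intro ω
    have hfun : ∀ k, ((if k < K then g k + ε k ω else 0) - g k) ^ 2
        = (if k < K then (ε k ω) ^ 2 - g k ^ 2 else 0) + g k ^ 2 := by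
      intro k
      by_cases hk : k < K <;> simp [hk] <;> ring
    have hsum1 : Summable (fun k => if k < K then (ε k ω) ^ 2 - g k ^ 2 else 0) := by
      apply summable_of_ne_finset_zero (s := Finset.range K)
      intro k hk
      simp only [Finset.mem_range, not_lt] at hk
      simp [not_lt.mpr hk]
    simp_rw [hfun]
    rw [Summable.tsum_add hsum1 hg2, tsum_eq_sum (s := Finset.range K) (by
      intro k hk
      simp only [Finset.mem_range] at hk
      simp [not_lt.mp hk])]
    congr 1
    exact Finset.sum_congr rfl fun k hk => by simp [Finset.mem_range.mp hk]
  -- compute the integral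
  have hint2 : ∀ k, Integrable (fun ω => ε k ω ^ 2 - g k ^ 2) μ :=
    fun k => (hint k).sub (integrable_const _)
  have hintsum : Integrable (fun ω => ∑ k ∈ Finset.range K, (ε k ω ^ 2 - g k ^ 2)) μ :=
    integrable_finset_sum _ fun k _ => hint2 k
  have hIeq : (∫ ω, ∑' k, ((if k < K then g k + ε k ω else 0) - g k) ^ 2 ∂μ)
      = (∑ k ∈ Finset.range K, (v k * M - g k ^ 2)) + ∑' k, g k ^ 2 := by
    rw [integral_congr_ae (ae_of_all _ hpt)]
    rw [integral_add hintsum (integrable_const _), integral_const]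
    simp only [probReal_univ, one_smul]
    congr 1
    rw [integral_finset_sum _ fun k _ => hint2 k]
    refine Finset.sum_congr rfl fun k _ => ?_
    rw [integral_sub (hint k) (integrable_const _), hmom k, integral_const]
    simp [measure_univ]
  -- bound the variance term
  have htlamsum : ∑ k ∈ Finset.range K, tlam k ≤ C * S := by
    calc ∑ k ∈ Finset.range K, tlam k
        ≤ ∑ k ∈ Finset.range K, C * ((k + 1 : ℕ) : ℝ) ^ (-1 - 2 * tα) := by
          refine Finset.sum_le_sum fun k _ => ?_
          have h := htlamle (k + 1) (by omega)
          simpa using h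
      _ = C * ∑ k ∈ Finset.range K, ((k + 1 : ℕ) : ℝ) ^ (-1 - 2 * tα) := by
          rw [Finset.mul_sum]
      _ ≤ C * S := by
          refine mul_le_mul_of_nonneg_left ?_ hC.le
          exact Summable.sum_le_tsum (Finset.range K) (fun k _ => Real.rpow_nonneg (by positivity) _) hS
  have hxNinv : x * N⁻¹ = rate := by
    rw [hratedef, hxdef, ← Real.rpow_neg_one N, ← Real.rpow_add hN0]
    congr 1
    field_simp
    ring
  have hKnm : (K : ℝ) * ((m : ℝ)⁻¹ * (n : ℝ)⁻¹) ≤ 2 * rate := by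
    have hmn : (m : ℝ)⁻¹ * (n : ℝ)⁻¹ = N⁻¹ := by
      rw [hNdef]
      push_cast
      rw [mul_inv]
      ring
    rw [hmn]
    have hNinv0 : (0:ℝ) ≤ N⁻¹ := by positivity
    calc (K : ℝ) * N⁻¹ ≤ (2 * x) * N⁻¹ := mul_le_mul_of_nonneg_right hK2x hNinv0
      _ = 2 * (x * N⁻¹) := by ring
      _ = 2 * rate := by rw [hxNinv]
  have hvsum : ∑ k ∈ Finset.range K, v k ≤ (m : ℝ)⁻¹ * (C * S) + 2 * rate := by
    have : ∑ k ∈ Finset.range K, v k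
        = (m : ℝ)⁻¹ * ∑ k ∈ Finset.range K, tlam k + (K : ℝ) * ((m : ℝ)⁻¹ * (n : ℝ)⁻¹) := by
      simp_rw [hvdef, mul_add]
      rw [Finset.sum_add_distrib, ← Finset.mul_sum, Finset.sum_const, Finset.card_range,
        nsmul_eq_mul]
    rw [this]
    have hminv0 : (0:ℝ) ≤ (m : ℝ)⁻¹ := by positivity
    have h1 : (m : ℝ)⁻¹ * ∑ k ∈ Finset.range K, tlam k ≤ (m : ℝ)⁻¹ * (C * S) :=
      mul_le_mul_of_nonneg_left htlamsum hminv0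
    linarith [hKnm]
  -- bound the bias term
  have hratex : x ^ (-(2 * α)) = rate := by
    rw [hxdef, ← Real.rpow_mul hN0.le]
    congr 1
    field_simp
  have hbias : (∑' k, g k ^ 2) - ∑ k ∈ Finset.range K, g k ^ 2 ≤ R ^ 2 * rate := by
    have htail : (∑ i ∈ Finset.range K, g i ^ 2) + (∑' i, g (i + K) ^ 2) = ∑' i, g i ^ 2 :=
      Summable.sum_add_tsum_nat_add (f := fun k => g k ^ 2) K hg2
    have htail' : (∑ i ∈ Finset.range K, g i ^ 2 * ((i + 1 : ℕ) : ℝ) ^ (2 * α))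
        + (∑' i, g (i + K) ^ 2 * ((i + K + 1 : ℕ) : ℝ) ^ (2 * α))
        = ∑' i, g i ^ 2 * ((i + 1 : ℕ) : ℝ) ^ (2 * α) :=
      Summable.sum_add_tsum_nat_add (f := fun k => g k ^ 2 * ((k + 1 : ℕ) : ℝ) ^ (2 * α)) K hsum
    have hsum_shift : Summable (fun i => g (i + K) ^ 2 * ((i + K + 1 : ℕ) : ℝ) ^ (2 * α)) :=
      (summable_nat_add_iff (f := fun k => g k ^ 2 * ((k + 1 : ℕ) : ℝ) ^ (2 * α)) K).mpr hsum
    have hg2_shift : Summable (fun i => g (i + K) ^ 2) :=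
      (summable_nat_add_iff (f := fun k => g k ^ 2) K).mpr hg2
    have hpoint : ∀ i : ℕ, g (i + K) ^ 2
        ≤ (g (i + K) ^ 2 * ((i + K + 1 : ℕ) : ℝ) ^ (2 * α)) * x ^ (-(2 * α)) := by
      intro i
      have hxp : (0:ℝ) < x ^ (2 * α) := Real.rpow_pos_of_pos hx0 _
      have h1 : x ^ (2 * α) ≤ ((i + K + 1 : ℕ) : ℝ) ^ (2 * α) := by
        refine Real.rpow_le_rpow hx0.le ?_ (by positivity)
        push_cast
        linarith [hxK, (Nat.cast_nonneg i : (0:ℝ) ≤ i)]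
      have h2 : (1:ℝ) ≤ ((i + K + 1 : ℕ) : ℝ) ^ (2 * α) * x ^ (-(2 * α)) := by
        rw [Real.rpow_neg hx0.le, ← div_eq_mul_inv, le_div_iff₀ hxp, one_mul]
        exact h1
      calc g (i + K) ^ 2 = g (i + K) ^ 2 * 1 := by ring
        _ ≤ g (i + K) ^ 2 * (((i + K + 1 : ℕ) : ℝ) ^ (2 * α) * x ^ (-(2 * α))) :=
            mul_le_mul_of_nonneg_left h2 (sq_nonneg _)
        _ = (g (i + K) ^ 2 * ((i + K + 1 : ℕ) : ℝ) ^ (2 * α)) * x ^ (-(2 * α)) := by ring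
    have hts : (∑' i, g (i + K) ^ 2)
        ≤ ∑' i, (g (i + K) ^ 2 * ((i + K + 1 : ℕ) : ℝ) ^ (2 * α)) * x ^ (-(2 * α)) :=
      Summable.tsum_le_tsum hpoint hg2_shift (hsum_shift.mul_right _)
    have hts2 : (∑' i, (g (i + K) ^ 2 * ((i + K + 1 : ℕ) : ℝ) ^ (2 * α)) * x ^ (-(2 * α)))
        = (∑' i, g (i + K) ^ 2 * ((i + K + 1 : ℕ) : ℝ) ^ (2 * α)) * x ^ (-(2 * α)) :=
      tsum_mul_right
    have htailbound : (∑' i, g (i + K) ^ 2 * ((i + K + 1 : ℕ) : ℝ) ^ (2 * α)) ≤ R ^ 2 := by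
      have hnn : (0:ℝ) ≤ ∑ k ∈ Finset.range K, g k ^ 2 * ((k + 1 : ℕ) : ℝ) ^ (2 * α) :=
        Finset.sum_nonneg fun k _ => mul_nonneg (sq_nonneg _) (Real.rpow_nonneg (by positivity) _)
      linarith [htail', hsob]
    have hxneg0 : (0:ℝ) ≤ x ^ (-(2 * α)) := Real.rpow_nonneg hx0.le _
    have : (∑' i, g (i + K) ^ 2) ≤ R ^ 2 * x ^ (-(2 * α)) := by
      calc (∑' i, g (i + K) ^ 2)
          ≤ (∑' i, g (i + K) ^ 2 * ((i + K + 1 : ℕ) : ℝ) ^ (2 * α)) * x ^ (-(2 * α)) := by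
            rw [← hts2]; exact hts
        _ ≤ R ^ 2 * x ^ (-(2 * α)) := mul_le_mul_of_nonneg_right htailbound hxneg0
    rw [hratex] at this
    linarith [htail]
  -- put everything together
  rw [hIeq]
  have hsummed : ∑ k ∈ Finset.range K, (v k * M - g k ^ 2)
      = M * (∑ k ∈ Finset.range K, v k) - ∑ k ∈ Finset.range K, g k ^ 2 := by
    rw [Finset.sum_sub_distrib, ← Finset.sum_mul, mul_comm]
  rw [hsummed]
  have hminv0 : (0:ℝ) ≤ (m : ℝ)⁻¹ := by positivity
  have hA : M * (∑ k ∈ Finset.range K, v k) ≤ M * ((m : ℝ)⁻¹ * (C * S) + 2 * rate) :=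
    mul_le_mul_of_nonneg_left hvsum hM0
  have hCS0 : (0:ℝ) ≤ M * C * S := mul_nonneg (mul_nonneg hM0 hC.le) hS0
  have hAr : M * ((m : ℝ)⁻¹ * (C * S) + 2 * rate)
      = M * C * S * (m : ℝ)⁻¹ + 2 * M * rate := by ring
  have he1 : M * C * S * (m : ℝ)⁻¹ ≤ (M * C * S + 2 * M + R ^ 2 + 1) * (m : ℝ)⁻¹ := by
    have : M * C * S ≤ M * C * S + 2 * M + R ^ 2 + 1 := by nlinarith [sq_nonneg R]
    exact mul_le_mul_of_nonneg_right this hminv0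
  have he2 : (2 * M + R ^ 2) * rate ≤ (M * C * S + 2 * M + R ^ 2 + 1) * rate := by
    have : 2 * M + R ^ 2 ≤ M * C * S + 2 * M + R ^ 2 + 1 := by linarith
    exact mul_le_mul_of_nonneg_right this hrate0
  have hexp : (M * C * S + 2 * M + R ^ 2 + 1) * ((m : ℝ)⁻¹ + rate)
      = (M * C * S + 2 * M + R ^ 2 + 1) * (m : ℝ)⁻¹
        + (M * C * S + 2 * M + R ^ 2 + 1) * rate := by ring
  linarith [hA, hbias, hAr, he1, he2, hexp]
end

section
/- Under the double-truncation estimator risk formula $R(k_1,k_2) = \frac{k_1}{n} + \sum_{k=k_1+1}^{k_2}(\tilde\lambda_k(1+\tfrac1m) + \tfrac{1}{nm}) + \sum_{k>k_2}(g_k^2 + \tilde\lambda_k)$ with $\tilde\lambda_k \leq C k^{-1-2\tilde\alpha}$ and $g \in \mathcal{S}(\alpha,R)$, choosing $k_1 = \lceil n^{1/(1+2\tilde\alpha)}\rceil$ and $k_2 = \max(k_1, \lceil(nm)^{1/(1+2\alpha)}\rceil)$ yields $\sup_{g\in\mathcal{S}(\alpha,R)} R(k_1,k_2) \leq C'\big(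 (nm)^{-2\alpha/(1+2\alpha)} + n^{-2\tilde\alpha/(1+2\tilde\alpha)}\big)$ for some constant $C'$ depending only on $C, \alpha, \tilde\alpha, R$. -/
open Real

lemma step_ineq (β : ℝ) (hβ : 0 < β) (a : ℝ) (ha : 1 ≤ a) :
    (a + 1) ^ (-1 - 2 * β) ≤ (a ^ (-(2 * β)) - (a + 1) ^ (-(2 * β))) / (2 * β) := by
  have ha0 : 0 < a := by linarith
  have hnot : (0:ℝ) ∉ Set.uIcc a (a+1) := by
    rw [Set.uIcc_of_le (by linarith)]
    intro h
    exact absurd h.1 (by linarith)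
  have hr : (-1 - 2*β) ≠ -1 := by intro h; nlinarith
  have h1 : ∫ x in a..(a+1), x ^ (-1 - 2*β) =
      (a ^ (-(2*β)) - (a+1) ^ (-(2*β))) / (2*β) := by
    rw [integral_rpow (Or.inr ⟨hr, hnot⟩)]
    have e : -1 - 2*β + 1 = -(2*β) := by ring
    rw [e]
    field_simp
    ring
  have h2 : (a + 1) ^ (-1 - 2*β) ≤ ∫ x in a..(a+1), x ^ (-1 - 2*β) := by
    have hconst : ∫ _x in a..(a+1), (a+1) ^ (-1 - 2*β) = (a+1) ^ (-1 - 2*β) := by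
      rw [intervalIntegral.integral_const]; simp
    rw [← hconst]
    apply intervalIntegral.integral_mono_on (by linarith)
    · exact intervalIntegrable_const
    · exact intervalIntegral.intervalIntegrable_rpow (Or.inr hnot)
    · intro x hx
      exact Real.rpow_le_rpow_of_nonpos (by linarith [hx.1]) hx.2 (by nlinarith)
  rw [h1] at h2
  exact h2

lemma tail_sum (β : ℝ) (hβ : 0 < β) (K : ℕ) (hK : 1 ≤ K) :
    ∑' j : ℕ, ((K + j + 1 : ℕ) : ℝ) ^ (-1 - 2 * β) ≤ (K : ℝ) ^ (-(2 * β)) / (2 * β) := by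
  set f : ℕ → ℝ := fun j => ((K : ℝ) + j) ^ (-(2*β)) with hf
  apply Real.tsum_le_of_sum_range_le
  · intro j; positivity
  · intro N
    have hstep : ∀ j : ℕ, ((K + j + 1 : ℕ) : ℝ) ^ (-1 - 2*β) ≤ (f j - f (j+1)) / (2*β) := by
      intro j
      have hkj : (1:ℝ) ≤ (K : ℝ) + j := by
        have : (1:ℝ) ≤ (K:ℝ) := by exact_mod_cast hK
        have : (0:ℝ) ≤ (j:ℝ) := Nat.cast_nonneg j
        linarith
      have h := step_ineq β hβ ((K:ℝ) + j) hkj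
      have e1 : ((K + j + 1 : ℕ) : ℝ) = (K:ℝ) + j + 1 := by push_cast; ring
      have e2 : f (j+1) = ((K:ℝ) + j + 1) ^ (-(2*β)) := by
        simp only [hf]; push_cast; ring_nf
      rw [e1, e2]
      exact h
    calc ∑ j ∈ Finset.range N, ((K + j + 1 : ℕ) : ℝ) ^ (-1 - 2*β)
        ≤ ∑ j ∈ Finset.range N, (f j - f (j+1)) / (2*β) :=
          Finset.sum_le_sum fun j _ => hstep j
      _ = (f 0 - f N) / (2*β) := by rw [← Finset.sum_div, Finset.sum_range_sub']
      _ ≤ f 0 / (2*β) := by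
          have hfN : 0 ≤ f N := by positivity
          gcongr
          linarith
      _ = (K : ℝ) ^ (-(2*β)) / (2*β) := by simp [hf]

lemma summable_pow_tail (β : ℝ) (hβ : 0 < β) (K : ℕ) :
    Summable (fun j : ℕ => ((K + j + 1 : ℕ) : ℝ) ^ (-1 - 2 * β)) := by
  have h0 : Summable (fun k : ℕ => ((k : ℝ)) ^ (-1 - 2 * β)) :=
    Real.summable_nat_rpow.mpr (by linarith)
  have h1 := (summable_nat_add_iff (K + 1)).mpr h0
  apply h1.congr
  intro j
  congr 1
  push_cast
  ring

set_option maxHeartbeats 1000000 in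
/-- With `λ̃ₖ ≤ C k^(-1-2ᾱ)` and the oracle thresholds `k₁ = ⌈n^(1/(1+2ᾱ))⌉`,
`k₂ = max(k₁, ⌈(nm)^(1/(1+2α))⌉)`, the double-truncation risk
`R(k₁,k₂) = k₁/n + ∑_{k₁<k≤k₂}(λ̃ₖ(1+1/m) + 1/(nm)) + ∑_{k>k₂}(gₖ² + λ̃ₖ)` is bounded
uniformly over the Sobolev ellipsoid by a multiple of
`(nm)^(-2α/(1+2α)) + n^(-2ᾱ/(1+2ᾱ))`. (Coefficients are indexed from 1; the Lean index
`k` is coefficient `k+1`.) -/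
theorem double_truncation_oracle_rate (C α tα R : ℝ) (hC : 0 < C) (hα : 0 < α)
    (htα : 0 < tα) (hR : 0 < R) :
    ∃ C' : ℝ, 0 < C' ∧
      ∀ n m : ℕ, 1 ≤ n → 1 ≤ m →
      ∀ tlam : ℕ → ℝ, (∀ k, 0 ≤ tlam k) →
        (∀ k : ℕ, tlam k ≤ C * ((k + 1 : ℕ) : ℝ) ^ (-1 - 2 * tα)) →
      ∀ g : ℕ → ℝ,
        Summable (fun k => g k ^ 2 * ((k + 1 : ℕ) : ℝ) ^ (2 * α)) →
        (∑' k, g k ^ 2 * ((k + 1 : ℕ) : ℝ) ^ (2 * α)) ≤ R ^ 2 →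
      ((⌈(n : ℝ) ^ (1 / (1 + 2 * tα))⌉₊ : ℝ) / n +
          (∑ k ∈ Finset.Ico ⌈(n : ℝ) ^ (1 / (1 + 2 * tα))⌉₊
              (max ⌈(n : ℝ) ^ (1 / (1 + 2 * tα))⌉₊
                ⌈((n * m : ℕ) : ℝ) ^ (1 / (1 + 2 * α))⌉₊),
            (tlam k * (1 + (m : ℝ)⁻¹) + ((n : ℝ) * m)⁻¹)) +
          ∑' j, (g ((max ⌈(n : ℝ) ^ (1 / (1 + 2 * tα))⌉₊
                ⌈((n * m : ℕ) : ℝ) ^ (1 / (1 + 2 * α))⌉₊) + j) ^ 2 +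
              tlam ((max ⌈(n : ℝ) ^ (1 / (1 + 2 * tα))⌉₊
                ⌈((n * m : ℕ) : ℝ) ^ (1 / (1 + 2 * α))⌉₊) + j))) ≤
        C' * (((n * m : ℕ) : ℝ) ^ (-(2 * α) / (1 + 2 * α)) +
          (n : ℝ) ^ (-(2 * tα) / (1 + 2 * tα))) := by
  refine ⟨4 + R ^ 2 + 2 * C / tα, by positivity, ?_⟩
  intro n m hn hm tlam htl0 htlC g hgsum hgR
  set p : ℝ := 1 / (1 + 2 * tα) with hp
  set q : ℝ := 1 / (1 + 2 * α) with hq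
  set x : ℝ := (n : ℝ) ^ p with hxdef
  set y : ℝ := ((n * m : ℕ) : ℝ) ^ q with hydef
  set k1 : ℕ := ⌈x⌉₊ with hk1def
  set c2 : ℕ := ⌈y⌉₊ with hc2def
  set k2 : ℕ := max k1 c2 with hk2def
  set B : ℝ := (n : ℝ) ^ (-(2 * tα) / (1 + 2 * tα)) with hBdef
  set A : ℝ := ((n * m : ℕ) : ℝ) ^ (-(2 * α) / (1 + 2 * α)) with hAdef
  -- basic positivity
  have hn1 : (1 : ℝ) ≤ (n : ℝ) := by exact_mod_cast hn
  have hnm1 : (1 : ℝ) ≤ ((n * m : ℕ) : ℝ) := by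
    have : 1 ≤ n * m := Nat.one_le_iff_ne_zero.mpr (by positivity)
    exact_mod_cast this
  have hn0 : (0 : ℝ) < (n : ℝ) := by linarith
  have hnm0 : (0 : ℝ) < ((n * m : ℕ) : ℝ) := by linarith
  have hx1 : (1 : ℝ) ≤ x := Real.one_le_rpow hn1 (by positivity)
  have hy1 : (1 : ℝ) ≤ y := Real.one_le_rpow hnm1 (by positivity)
  have hx0 : (0 : ℝ) < x := by linarith
  have hy0 : (0 : ℝ) < y := by linarith
  have hk1x : x ≤ (k1 : ℝ) := Nat.le_ceil x
  have hk1le : (k1 : ℝ) ≤ 2 * x := by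
    have := Nat.ceil_lt_add_one hx0.le
    linarith
  have hc2y : y ≤ (c2 : ℝ) := Nat.le_ceil y
  have hc2le : (c2 : ℝ) ≤ 2 * y := by
    have := (Nat.ceil_lt_add_one hy0.le)
    linarith
  have hk11 : 1 ≤ k1 := Nat.one_le_ceil_iff.mpr hx0
  have hk1k2 : k1 ≤ k2 := le_max_left _ _
  have hc2k2 : c2 ≤ k2 := le_max_right _ _
  have hk21 : 1 ≤ k2 := le_trans hk11 hk1k2
  have hk1k2R : (k1 : ℝ) ≤ (k2 : ℝ) := by exact_mod_cast hk1k2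
  have hyk2 : y ≤ (k2 : ℝ) := le_trans hc2y (by exact_mod_cast hc2k2)
  have hxk2 : x ≤ (k2 : ℝ) := le_trans hk1x hk1k2R
  -- rpow identities
  have hden : (1 : ℝ) + 2 * tα ≠ 0 := by positivity
  have hdenα : (1 : ℝ) + 2 * α ≠ 0 := by positivity
  have hBx : x / (n : ℝ) = B := by
    rw [hBdef, hxdef, show -(2 * tα) / (1 + 2 * tα) = p - 1 by rw [hp]; field_simp; ring,
      Real.rpow_sub hn0, Real.rpow_one]
  have hxB : x ^ (-(2 * tα)) = B := by
    rw [hxdef, ← Real.rpow_mul hn0.le, hBdef]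
    congr 1
    rw [hp]; field_simp
  have hyA2 : y / ((n * m : ℕ) : ℝ) = A := by
    rw [hAdef, hydef, show -(2 * α) / (1 + 2 * α) = q - 1 by rw [hq]; field_simp; ring,
      Real.rpow_sub hnm0, Real.rpow_one]
  have hyA : y ^ (-(2 * α)) = A := by
    rw [hydef, ← Real.rpow_mul hnm0.le, hAdef]
    congr 1
    rw [hq]; field_simp
  have hB0 : 0 ≤ B := by rw [hBdef]; positivity
  have hA0 : 0 ≤ A := by rw [hAdef]; positivity
  -- Piece 1 : k1/n ≤ 2B
  have P1 : (k1 : ℝ) / n ≤ 2 * B := by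
    rw [← hBx, ← mul_div_assoc]
    gcongr
  -- tail sums of tlam
  have htail : ∀ K : ℕ, 1 ≤ K →
      ∑' j : ℕ, (C * ((K + j + 1 : ℕ) : ℝ) ^ (-1 - 2 * tα)) ≤ C * (K : ℝ) ^ (-(2 * tα)) / (2 * tα) := by
    intro K hK
    rw [tsum_mul_left, mul_div_assoc]
    exact mul_le_mul_of_nonneg_left (tail_sum tα htα K hK) hC.le
  have hsummtail : ∀ K : ℕ, Summable (fun j : ℕ => C * ((K + j + 1 : ℕ) : ℝ) ^ (-1 - 2 * tα)) :=
    fun K => (summable_pow_tail tα htα K).mul_left C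
  -- Piece 2 : middle sum
  have P2 : (∑ k ∈ Finset.Ico k1 k2, (tlam k * (1 + (m : ℝ)⁻¹) + ((n : ℝ) * m)⁻¹)) ≤
      (C / tα) * B + 2 * A := by
    rw [Finset.sum_add_distrib]
    have hm1 : (1 : ℝ) + (m : ℝ)⁻¹ ≤ 2 := by
      have : (1 : ℝ) ≤ (m : ℝ) := by exact_mod_cast hm
      have : (m : ℝ)⁻¹ ≤ 1 := by
        rw [inv_le_one_iff₀]; right; exact this
      linarith
    have S1 : (∑ k ∈ Finset.Ico k1 k2, tlam k * (1 + (m : ℝ)⁻¹)) ≤ (C / tα) * B := by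
      have h1 : (∑ k ∈ Finset.Ico k1 k2, tlam k * (1 + (m : ℝ)⁻¹)) ≤
          2 * ∑ k ∈ Finset.Ico k1 k2, tlam k := by
        rw [Finset.mul_sum]
        apply Finset.sum_le_sum
        intro k _
        have := htl0 k
        nlinarith
      have h2 : (∑ k ∈ Finset.Ico k1 k2, tlam k) ≤ C * (k1 : ℝ) ^ (-(2 * tα)) / (2 * tα) := by
        rw [Finset.sum_Ico_eq_sum_range]
        calc ∑ i ∈ Finset.range (k2 - k1), tlam (k1 + i)
            ≤ ∑ i ∈ Finset.range (k2 - k1), C * ((k1 + i + 1 : ℕ) : ℝ) ^ (-1 - 2 * tα) :=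
              Finset.sum_le_sum fun i _ => htlC (k1 + i)
          _ ≤ ∑' j : ℕ, C * ((k1 + j + 1 : ℕ) : ℝ) ^ (-1 - 2 * tα) := by
              apply Summable.sum_le_tsum _ (fun i _ => by positivity) (hsummtail k1)
          _ ≤ C * (k1 : ℝ) ^ (-(2 * tα)) / (2 * tα) := htail k1 hk11
      have h3 : (k1 : ℝ) ^ (-(2 * tα)) ≤ B := by
        rw [← hxB]
        exact Real.rpow_le_rpow_of_nonpos hx0 hk1x (by linarith)
      calc (∑ k ∈ Finset.Ico k1 k2, tlam k * (1 + (m : ℝ)⁻¹))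
          ≤ 2 * (C * (k1 : ℝ) ^ (-(2 * tα)) / (2 * tα)) := by linarith
        _ = (C / tα) * ((k1 : ℝ) ^ (-(2 * tα))) := by
            field_simp
            try ring
        _ ≤ (C / tα) * B := by
            apply mul_le_mul_of_nonneg_left h3 (by positivity)
    have S2 : (∑ _k ∈ Finset.Ico k1 k2, ((n : ℝ) * m)⁻¹) ≤ 2 * A := by
      rw [Finset.sum_const, Nat.card_Ico, nsmul_eq_mul]
      have hdiff : ((k2 - k1 : ℕ) : ℝ) ≤ (c2 : ℝ) := by
        have : k2 - k1 ≤ c2 := by omega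
        exact_mod_cast this
      have hnm : ((n : ℝ) * m) = ((n * m : ℕ) : ℝ) := by push_cast; ring
      calc ((k2 - k1 : ℕ) : ℝ) * ((n : ℝ) * m)⁻¹ ≤ (c2 : ℝ) * ((n : ℝ) * m)⁻¹ := by
            gcongr
        _ ≤ (2 * y) * ((n : ℝ) * m)⁻¹ := by gcongr
        _ = 2 * (y / ((n * m : ℕ) : ℝ)) := by rw [hnm]; ring
        _ = 2 * A := by rw [hyA2]
    linarith
  -- summability facts
  have hw1 : ∀ k : ℕ, (1 : ℝ) ≤ ((k + 1 : ℕ) : ℝ) ^ (2 * α) := by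
    intro k
    apply Real.one_le_rpow (by exact_mod_cast Nat.succ_le_succ (Nat.zero_le k)) (by positivity)
  have hg2 : Summable (fun k : ℕ => g k ^ 2) := by
    apply Summable.of_nonneg_of_le (fun k => sq_nonneg _) _ hgsum
    intro k
    nlinarith [hw1 k, sq_nonneg (g k)]
  have htlsum : Summable tlam := by
    apply Summable.of_nonneg_of_le htl0 _ ((summable_pow_tail tα htα 0).mul_left C)
    intro k
    have := htlC k
    simpa using this
  have hg2s : Summable (fun j : ℕ => g (k2 + j) ^ 2) := by
    have := (summable_nat_add_iff k2).mpr hg2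
    apply this.congr
    intro j
    simp [add_comm]
  have htls : Summable (fun j : ℕ => tlam (k2 + j)) := by
    have := (summable_nat_add_iff k2).mpr htlsum
    apply this.congr
    intro j
    simp [add_comm]
  have hgws : Summable (fun j : ℕ => g (k2 + j) ^ 2 * ((k2 + j + 1 : ℕ) : ℝ) ^ (2 * α)) := by
    have := (summable_nat_add_iff k2).mpr hgsum
    apply this.congr
    intro j
    simp [add_comm]
  -- Piece 3 : tail
  have hC2tα : C / (2 * tα) ≤ C / tα := by
    apply div_le_div_of_nonneg_left hC.le htα
    linarith
  have P3 : (∑' j, (g (k2 + j) ^ 2 + tlam (k2 + j))) ≤ R ^ 2 * A + (C / tα) * B := by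
    rw [Summable.tsum_add hg2s htls]
    have hk2pos : (0 : ℝ) < (k2 : ℝ) := by exact_mod_cast hk21
    have T1 : (∑' j, g (k2 + j) ^ 2) ≤ R ^ 2 * A := by
      have hpt : ∀ j : ℕ, g (k2 + j) ^ 2 ≤
          (g (k2 + j) ^ 2 * ((k2 + j + 1 : ℕ) : ℝ) ^ (2 * α)) * (k2 : ℝ) ^ (-(2 * α)) := by
        intro j
        have h1 : (k2 : ℝ) ^ (2 * α) ≤ ((k2 + j + 1 : ℕ) : ℝ) ^ (2 * α) := by
          apply Real.rpow_le_rpow hk2pos.le _ (by positivity)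
          push_cast; linarith [Nat.cast_nonneg (α := ℝ) j]
        have h2 : (1 : ℝ) ≤ ((k2 + j + 1 : ℕ) : ℝ) ^ (2 * α) * (k2 : ℝ) ^ (-(2 * α)) := by
          rw [Real.rpow_neg hk2pos.le, ← div_eq_mul_inv, le_div_iff₀ (by positivity), one_mul]
          exact h1
        nlinarith [sq_nonneg (g (k2 + j))]
      calc (∑' j, g (k2 + j) ^ 2)
          ≤ ∑' j, (g (k2 + j) ^ 2 * ((k2 + j + 1 : ℕ) : ℝ) ^ (2 * α)) * (k2 : ℝ) ^ (-(2 * α)) :=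
            Summable.tsum_le_tsum hpt hg2s (hgws.mul_right _)
        _ = (∑' j, g (k2 + j) ^ 2 * ((k2 + j + 1 : ℕ) : ℝ) ^ (2 * α)) * (k2 : ℝ) ^ (-(2 * α)) :=
            tsum_mul_right
        _ ≤ R ^ 2 * (k2 : ℝ) ^ (-(2 * α)) := by
            apply mul_le_mul_of_nonneg_right _ (by positivity)
            calc (∑' j, g (k2 + j) ^ 2 * ((k2 + j + 1 : ℕ) : ℝ) ^ (2 * α))
                ≤ ∑' k, g k ^ 2 * ((k + 1 : ℕ) : ℝ) ^ (2 * α) := by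
                  apply Summable.tsum_le_tsum_of_inj (fun j => k2 + j)
                    (add_right_injective k2)
                    (fun c _ => by positivity)
                    (fun j => le_refl _) hgws hgsum
              _ ≤ R ^ 2 := hgR
        _ ≤ R ^ 2 * A := by
            apply mul_le_mul_of_nonneg_left _ (by positivity)
            rw [← hyA]
            exact Real.rpow_le_rpow_of_nonpos hy0 hyk2 (by linarith)
    have T2 : (∑' j, tlam (k2 + j)) ≤ (C / tα) * B := by
      calc (∑' j, tlam (k2 + j))
          ≤ ∑' j : ℕ, C * ((k2 + j + 1 : ℕ) : ℝ) ^ (-1 - 2 * tα) :=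
            Summable.tsum_le_tsum (fun j => htlC (k2 + j)) htls (hsummtail k2)
        _ ≤ C * (k2 : ℝ) ^ (-(2 * tα)) / (2 * tα) := htail k2 hk21
        _ = (C / (2 * tα)) * ((k2 : ℝ) ^ (-(2 * tα))) := by
            field_simp
        _ ≤ (C / (2 * tα)) * B := by
            apply mul_le_mul_of_nonneg_left _ (by positivity)
            rw [← hxB]
            exact Real.rpow_le_rpow_of_nonpos hx0 hxk2 (by linarith)
        _ ≤ (C / tα) * B := mul_le_mul_of_nonneg_right hC2tα hB0
    linarith
  -- combine
  have hCtα : 0 ≤ C / tα := by positivity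
  calc ((k1 : ℝ) / n +
        (∑ k ∈ Finset.Ico k1 k2, (tlam k * (1 + (m : ℝ)⁻¹) + ((n : ℝ) * m)⁻¹)) +
        ∑' j, (g (k2 + j) ^ 2 + tlam (k2 + j)))
      ≤ 2 * B + ((C / tα) * B + 2 * A) + (R ^ 2 * A + (C / tα) * B) := by
        exact add_le_add (add_le_add P1 P2) P3
    _ ≤ (4 + R ^ 2 + 2 * C / tα) * (A + B) := by
        have e : (4 + R ^ 2 + 2 * C / tα) * (A + B) =
            4 * A + 4 * B + R ^ 2 * A + R ^ 2 * B + 2 * (C / tα * A) + 2 * (C / tα * B) := by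
          ring
        rw [e]
        linarith [mul_nonneg hCtα hA0, mul_nonneg (sq_nonneg R) hB0, hA0, hB0]
end

section
/- Let $Z_1, Z_2, \ldots$ be i.i.d. standard Gaussians, let $\tilde\lambda_k \leq C k^{-1-2\tilde\alpha}$ be decreasing, and fix integers $k_2 > k_2^* \geq 1$ with $\sum_{k > k_2^*} \tilde\lambda_k \leq k_2^*/(nm)$. Then for any $\tau_2 > 6$ there exist constants $c, c' > 0$ (depending on $\tau_2, C, \tilde\alpha$) such that, provided $k_2^* \geq c'\, n^{1/(1+2\tilde\alpha)}$, $\sum_{\ell = k_2+1}^{\lfloor\sqrt{nm}\rfloor} \mathbb{P}\Big(\sum_{k=k_2+1}^{\ell} \big(\tilde\lambda_k + \tfrac1n\big) Z_k^2 > \tfrac{\tau_2 - 2}{2}\cdot\tfrac{\ell}{n}\Big) \leq \tfrac1c e^{-c k_2^*}$. -/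
set_option maxHeartbeats 2000000
open MeasureTheory ProbabilityTheory Real
open scoped ENNReal NNReal

lemma gauss_density_eq (a : ℝ) :
    (fun x : ℝ => ((gaussianPDFReal 0 1 x).toNNReal : ℝ) * Real.exp (a*x^2))
      = fun x : ℝ => (Real.sqrt (2*π))⁻¹ * Real.exp (-(1/2-a) * x^2) := by
  funext x
  rw [Real.coe_toNNReal _ (gaussianPDFReal_nonneg 0 1 x)]
  rw [gaussianPDFReal_def]
  simp only [NNReal.coe_one, mul_one, sub_zero]
  rw [mul_assoc, ← Real.exp_add]
  ring_nf

lemma gauss_withDensity : gaussianReal 0 1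
    = volume.withDensity (fun x => ((gaussianPDFReal 0 1 x).toNNReal : ℝ≥0∞)) := by
  rw [gaussianReal_of_var_ne_zero 0 one_ne_zero]; rfl

lemma gauss_integrable (a : ℝ) (ha : a < 1/2) :
    Integrable (fun x => Real.exp (a*x^2)) (gaussianReal 0 1) := by
  rw [gauss_withDensity,
    integrable_withDensity_iff_integrable_smul
      ((measurable_gaussianPDFReal 0 1).real_toNNReal)]
  simp only [NNReal.smul_def, smul_eq_mul]
  rw [gauss_density_eq a]
  exact (integrable_exp_neg_mul_sq (by linarith)).const_mul _

lemma gauss_integral (a : ℝ) (ha : a < 1/2) :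
    ∫ x, Real.exp (a*x^2) ∂(gaussianReal 0 1) = (Real.sqrt (1-2*a))⁻¹ := by
  rw [gauss_withDensity, integral_withDensity_eq_integral_smul
      ((measurable_gaussianPDFReal 0 1).real_toNNReal)]
  simp only [NNReal.smul_def, smul_eq_mul]
  rw [gauss_density_eq a]
  rw [integral_const_mul, integral_gaussian]
  have hb : (0:ℝ) < 1/2 - a := by linarith
  have h2 : Real.sqrt (2*π) = Real.sqrt 2 * Real.sqrt π := Real.sqrt_mul (by norm_num) _
  have h3 : Real.sqrt (π / (1/2-a)) = Real.sqrt π / Real.sqrt (1/2-a) :=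
    Real.sqrt_div pi_pos.le _
  have h4 : Real.sqrt (1-2*a) = Real.sqrt 2 * Real.sqrt (1/2-a) := by
    rw [← Real.sqrt_mul (by norm_num)]; ring_nf
  have hπ : Real.sqrt π ≠ 0 := by positivity
  have hs2 : Real.sqrt 2 ≠ 0 := by positivity
  have hsb : Real.sqrt (1/2-a) ≠ 0 := by positivity
  rw [h2, h3, h4]
  field_simp

lemma sqrt_inv_le_exp (u : ℝ) (h0 : 0 ≤ u) (h1 : u ≤ 1/4) :
    (Real.sqrt (1-2*u))⁻¹ ≤ Real.exp (u + 4*u^2) := by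
  have hb : (0:ℝ) < 1-2*u := by linarith
  have h5 : Real.exp (-(2*u+8*u^2)) ≤ 1-2*u := by
    conv_rhs => rw [← Real.exp_log hb]
    apply Real.exp_le_exp.mpr
    have hlog := Real.log_le_sub_one_of_pos (inv_pos.mpr hb)
    rw [Real.log_inv] at hlog
    have hinv : (1-2*u) * (1-2*u)⁻¹ = 1 := mul_inv_cancel₀ hb.ne'
    nlinarith [hlog, hinv, sq_nonneg u, hb]
  have h6 : Real.exp (-(u+4*u^2)) ≤ Real.sqrt (1-2*u) := by
    rw [Real.le_sqrt' (Real.exp_pos _)]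
    rw [sq, ← Real.exp_add, show -(u+4*u^2) + -(u+4*u^2) = -(2*u+8*u^2) by ring]
    exact h5
  have := inv_anti₀ (Real.exp_pos _) h6
  rwa [← Real.exp_neg, neg_neg] at this

lemma sum_sub_le_tsum {f : ℕ → ℝ} (hf0 : ∀ j, 0 ≤ f j) (hf : Summable f)
    (N a b : ℕ) (hN : N ≤ a) :
    ∑ k ∈ Finset.Icc a b, f (k - N) ≤ ∑' j, f j := by
  rw [← Finset.sum_image (g := fun k => k - N) (f := f)
    (fun x hx y hy h => by
      have hx' := (Finset.mem_Icc.mp hx).1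
      have hy' := (Finset.mem_Icc.mp hy).1
      have h' : x - N = y - N := h
      omega)]
  exact Summable.sum_le_tsum _ (fun i _ => hf0 i) hf

/-- Overshoot probability bound for the Lepskii-type data-driven threshold: for i.i.d.
standard Gaussians `Z` and decreasing `λ̃ₖ ≤ C k^(-1-2ᾱ)` with `∑_{k>k₂*} λ̃ₖ ≤ k₂*/(nm)`,
if `k₂* ≥ c' n^(1/(1+2ᾱ))` then
`∑_{ℓ=k₂+1}^{⌊√(nm)⌋} P(∑_{k=k₂+1}^{ℓ}(λ̃ₖ + 1/n) Zₖ² > ((τ₂-2)/2)·ℓ/n) ≤ c⁻¹ e^{-c k₂*}`.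
(Here `λ̃` is indexed directly from 1.) -/
theorem lepskii_overshoot_bound (C tα τ₂ : ℝ) (hC : 0 < C) (htα : 0 < tα)
    (hτ : 6 < τ₂) :
    ∃ c : ℝ, 0 < c ∧ ∃ c' : ℝ, 0 < c' ∧
      ∀ (n m : ℕ), 1 ≤ n → 1 ≤ m →
      ∀ (tlam : ℕ → ℝ), (∀ k, 1 ≤ k → 0 ≤ tlam k) →
        (∀ k : ℕ, 1 ≤ k → tlam k ≤ C * (k : ℝ) ^ (-1 - 2 * tα)) →
        (∀ j k : ℕ, 1 ≤ j → j ≤ k → tlam k ≤ tlam j) →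
      ∀ (k₂star k₂ : ℕ), 1 ≤ k₂star → k₂star < k₂ →
        (∑' j : ℕ, tlam (k₂star + 1 + j)) ≤ (k₂star : ℝ) / ((n : ℝ) * m) →
        c' * (n : ℝ) ^ (1 / (1 + 2 * tα)) ≤ (k₂star : ℝ) →
      ∀ (Ω : Type) (_ : MeasurableSpace Ω) (μ : Measure Ω), IsProbabilityMeasure μ →
      ∀ (Z : ℕ → Ω → ℝ), (∀ k, Measurable (Z k)) →
        iIndepFun Z μ →
        (∀ k, μ.map (Z k) = gaussianReal 0 1) →
      (∑ ℓ ∈ Finset.Icc (k₂ + 1) (Nat.sqrt (n * m)),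
          (μ {ω | (τ₂ - 2) / 2 * ((ℓ : ℝ) / n) <
            ∑ k ∈ Finset.Icc (k₂ + 1) ℓ, (tlam k + (n : ℝ)⁻¹) * (Z k ω) ^ 2}).toReal)
        ≤ c⁻¹ * Real.exp (-c * k₂star) := by
  -- constants
  set β : ℝ := (τ₂ - 6) / 2 with hβdef
  have hβ : 0 < β := by simp only [hβdef]; linarith
  set es : ℝ := min (β/32) (1/16) with hesdef
  have hes : 0 < es := lt_min (by positivity) (by norm_num)
  have hes16 : es ≤ 1/16 := min_le_right _ _
  have hesβ : es ≤ β/32 := min_le_left _ _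
  set c₀ : ℝ := es * β / 2 with hc₀def
  have hc₀ : 0 < c₀ := by positivity
  have hr1 : Real.exp (-c₀) < 1 := Real.exp_lt_one_iff.mpr (by linarith)
  have hr0 : 0 < Real.exp (-c₀) := Real.exp_pos _
  refine ⟨min c₀ (1 - Real.exp (-c₀)), lt_min hc₀ (by linarith), ?_⟩
  set c : ℝ := min c₀ (1 - Real.exp (-c₀)) with hcdef
  have hc : 0 < c := lt_min hc₀ (by linarith)
  refine ⟨max 1 (C ^ (1/(1+2*tα))), lt_of_lt_of_le one_pos (le_max_left _ _), ?_⟩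
  set c' : ℝ := max 1 (C ^ (1/(1+2*tα))) with hc'def
  intro n m hn hm tlam htlam0 htlamC htlamdec k₂star k₂ hk₂star hk₂ htsum hkstar
    Ω mΩ μ hμ Z hZmeas hZindep hZmap
  have h2α : (0:ℝ) < 1 + 2*tα := by linarith
  have hn0 : (0:ℝ) < n := by exact_mod_cast hn
  -- Step A : tail bound on tlam
  have hA : ∀ k : ℕ, k₂star < k → tlam k ≤ (n:ℝ)⁻¹ := by
    intro k hk
    have hk1 : 1 ≤ k := le_trans hk₂star (le_of_lt hk)
    have hkr : (k₂star : ℝ) ≤ (k : ℝ) := by exact_mod_cast le_of_lt hk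
    have hkpos : (0:ℝ) < (k:ℝ) := by exact_mod_cast hk1
    have hbase : c' * (n:ℝ) ^ (1/(1+2*tα)) ≤ (k:ℝ) := le_trans hkstar hkr
    have hCn : C * n ≤ (k:ℝ) ^ (1+2*tα) := by
      have h1 : (c' * (n:ℝ) ^ (1/(1+2*tα))) ^ (1+2*tα) ≤ (k:ℝ) ^ (1+2*tα) :=
        Real.rpow_le_rpow (by positivity) hbase (by positivity)
      have h2 : (c' * (n:ℝ) ^ (1/(1+2*tα))) ^ (1+2*tα)
          = c' ^ (1+2*tα) * (n:ℝ) := by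
        rw [Real.mul_rpow (by positivity) (by positivity),
          ← Real.rpow_mul (Nat.cast_nonneg n), one_div_mul_cancel h2α.ne',
          Real.rpow_one]
      have hC' : C ≤ c' ^ (1+2*tα) := by
        have h5 := Real.rpow_le_rpow (z := 1+2*tα)
          (Real.rpow_nonneg hC.le _) (le_max_right 1 (C^(1/(1+2*tα)))) h2α.le
        rwa [← Real.rpow_mul hC.le, one_div_mul_cancel h2α.ne',
          Real.rpow_one] at h5
      calc C * n ≤ c' ^ (1+2*tα) * n := mul_le_mul_of_nonneg_right hC' hn0.le
        _ = (c' * (n:ℝ) ^ (1/(1+2*tα))) ^ (1+2*tα) := h2.symm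
        _ ≤ _ := h1
    have hkp : (0:ℝ) < (k:ℝ) ^ (1+2*tα) := by positivity
    have h3 : tlam k ≤ C * ((k:ℝ) ^ (1+2*tα))⁻¹ := by
      have := htlamC k hk1
      rwa [show (-1-2*tα) = -(1+2*tα) by ring,
        Real.rpow_neg (Nat.cast_nonneg k)] at this
    refine h3.trans ?_
    have h4 : ((k:ℝ) ^ (1+2*tα))⁻¹ ≤ (C * n)⁻¹ := inv_anti₀ (by positivity) hCn
    calc C * ((k:ℝ) ^ (1+2*tα))⁻¹ ≤ C * (C*n)⁻¹ :=
          mul_le_mul_of_nonneg_left h4 hC.le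
      _ = (n:ℝ)⁻¹ := by field_simp
  -- gamma bounds
  have hgam0 : ∀ k : ℕ, 1 ≤ k → 0 ≤ tlam k + (n:ℝ)⁻¹ := fun k hk =>
    add_nonneg (htlam0 k hk) (by positivity)
  have hgamub : ∀ k : ℕ, k₂star < k → tlam k + (n:ℝ)⁻¹ ≤ 2/n := by
    intro k hk
    have h1 := hA k hk
    rw [div_eq_mul_inv]
    linarith
  set s : ℝ := es * n with hsdef
  have hs0 : 0 ≤ s := by positivity
  set Y : ℕ → Ω → ℝ := fun k => (fun x : ℝ => (tlam k + (n:ℝ)⁻¹) * x^2) ∘ Z k with hYdef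
  have hYmeas : ∀ k, Measurable (Y k) := fun k => by
    simp only [hYdef]; fun_prop
  have hYindep : iIndepFun Y μ :=
    hZindep.comp (fun k => fun x : ℝ => (tlam k + (n:ℝ)⁻¹) * x^2) (fun k => by fun_prop)
  -- per-ℓ Chernoff bound
  have key : ∀ ℓ ∈ Finset.Icc (k₂+1) (Nat.sqrt (n*m)),
      (μ {ω | (τ₂ - 2) / 2 * ((ℓ : ℝ) / n) <
        ∑ k ∈ Finset.Icc (k₂ + 1) ℓ, (tlam k + (n : ℝ)⁻¹) * (Z k ω) ^ 2}).toReal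
      ≤ Real.exp (-c₀ * ℓ) := by
    intro ℓ hℓmem
    have hℓ : k₂ + 1 ≤ ℓ := (Finset.mem_Icc.mp hℓmem).1
    have hℓ0 : (0:ℝ) ≤ (ℓ:ℝ) := Nat.cast_nonneg _
    have hrange : ∀ k ∈ Finset.Icc (k₂+1) ℓ, k₂star < k := by
      intro k hk; have := (Finset.mem_Icc.mp hk).1; omega
    have hrange1 : ∀ k ∈ Finset.Icc (k₂+1) ℓ, 1 ≤ k := by
      intro k hk; have := hrange k hk; omega
    have hu0 : ∀ k ∈ Finset.Icc (k₂+1) ℓ, 0 ≤ s * (tlam k + (n:ℝ)⁻¹) :=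
      fun k hk => mul_nonneg hs0 (hgam0 k (hrange1 k hk))
    have hu4 : ∀ k ∈ Finset.Icc (k₂+1) ℓ, s * (tlam k + (n:ℝ)⁻¹) ≤ 1/4 := by
      intro k hk
      have h1 := hgamub k (hrange k hk)
      have h2 : s * (tlam k + (n:ℝ)⁻¹) ≤ s * (2/n) :=
        mul_le_mul_of_nonneg_left h1 hs0
      have h3 : s * (2/n) = 2 * es := by rw [hsdef]; field_simp
      rw [h3] at h2
      linarith
    -- mgf bound for each summand
    have hmgf : ∀ k ∈ Finset.Icc (k₂+1) ℓ, mgf (Y k) μ s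
        ≤ Real.exp (s * (tlam k + (n:ℝ)⁻¹) + 4 * (s * (tlam k + (n:ℝ)⁻¹))^2) := by
      intro k hk
      have hu0' := hu0 k hk
      have hu4' := hu4 k hk
      have hg : Measurable (fun x : ℝ =>
          Real.exp ((s * (tlam k + (n:ℝ)⁻¹)) * x^2)) := by fun_prop
      have h1 : mgf (Y k) μ s
          = ∫ x, Real.exp ((s * (tlam k + (n:ℝ)⁻¹)) * x^2) ∂(μ.map (Z k)) := by
        rw [integral_map (hZmeas k).aemeasurable hg.aestronglyMeasurable, mgf]
        congr 1
        funext ω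
        simp only [hYdef, Function.comp_apply]
        congr 1
        ring
      rw [h1, hZmap k, gauss_integral _ (by linarith)]
      exact sqrt_inv_le_exp _ hu0' hu4'
    -- integrability
    have hint : ∀ k ∈ Finset.Icc (k₂+1) ℓ,
        Integrable (fun ω => Real.exp (s * Y k ω)) μ := by
      intro k hk
      have hgi := gauss_integrable (s * (tlam k + (n:ℝ)⁻¹)) (by linarith [hu4 k hk])
      rw [← hZmap k] at hgi
      have hg : Measurable (fun x : ℝ =>
          Real.exp ((s * (tlam k + (n:ℝ)⁻¹)) * x^2)) := by fun_prop
      have h2 := (integrable_map_measure hg.aestronglyMeasurable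
        (hZmeas k).aemeasurable).mp hgi
      refine h2.congr (Filter.Eventually.of_forall fun ω => ?_)
      simp only [hYdef, Function.comp_apply]
      congr 1
      ring
    have hintsum : Integrable
        (fun ω => Real.exp (s * (∑ k ∈ Finset.Icc (k₂+1) ℓ, Y k) ω)) μ :=
      hYindep.integrable_exp_mul_sum hYmeas hint
    have hch := measure_ge_le_exp_mul_mgf (μ := μ)
      (X := ∑ k ∈ Finset.Icc (k₂+1) ℓ, Y k)
      ((τ₂ - 2) / 2 * ((ℓ : ℝ) / n)) hs0 hintsum
    have hsub : {ω | (τ₂ - 2) / 2 * ((ℓ : ℝ) / n) <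
          ∑ k ∈ Finset.Icc (k₂ + 1) ℓ, (tlam k + (n : ℝ)⁻¹) * (Z k ω) ^ 2}
        ⊆ {ω | (τ₂ - 2) / 2 * ((ℓ : ℝ) / n)
            ≤ (∑ k ∈ Finset.Icc (k₂+1) ℓ, Y k) ω} := by
      intro ω hω
      simp only [Set.mem_setOf_eq, Finset.sum_apply, hYdef, Function.comp_apply] at hω ⊢
      exact le_of_lt hω
    have hmono := ENNReal.toReal_mono (measure_ne_top μ _) (measure_mono hsub)
    refine hmono.trans (hch.trans ?_)
    rw [hYindep.mgf_sum hYmeas]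
    -- sum of gammas
    have hSgam : ∑ k ∈ Finset.Icc (k₂+1) ℓ, (tlam k + (n:ℝ)⁻¹) ≤ 2*(ℓ:ℝ)/n := by
      rw [Finset.sum_add_distrib, Finset.sum_const, Nat.card_Icc, nsmul_eq_mul]
      have hcard : ((ℓ + 1 - (k₂+1) : ℕ) : ℝ) ≤ (ℓ:ℝ) := by
        have h1 : ℓ + 1 - (k₂+1) ≤ ℓ := by omega
        exact_mod_cast h1
      have hSlam : ∑ k ∈ Finset.Icc (k₂+1) ℓ, tlam k ≤ (ℓ:ℝ)/n := by
        have hsummand : ∀ k ∈ Finset.Icc (k₂+1) ℓ,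
            tlam k = (fun j => tlam (k₂star+1+j)) (k - (k₂star+1)) := by
          intro k hk
          have := hrange k hk
          simp only []
          congr 1
          omega
        rw [Finset.sum_congr rfl hsummand]
        have hbase : Summable (fun j : ℕ => (j:ℝ) ^ (-1-2*tα)) :=
          Real.summable_nat_rpow.mpr (by linarith)
        have h6 : Summable (fun j : ℕ => C * ((j + (k₂star+1) : ℕ):ℝ)^(-1-2*tα)) :=
          (summable_nat_add_iff (k₂star+1)).mpr (hbase.mul_left C)
        have h7 : Summable (fun j : ℕ => C * ((k₂star+1+j : ℕ):ℝ)^(-1-2*tα)) :=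
          h6.congr (fun j => by rw [Nat.add_comm j (k₂star+1)])
        have hsummable : Summable (fun j => tlam (k₂star+1+j)) :=
          Summable.of_nonneg_of_le (fun j => htlam0 _ (by omega))
            (fun j => htlamC _ (by omega)) h7
        refine (sum_sub_le_tsum (fun j => htlam0 _ (by omega)) hsummable
          (k₂star+1) (k₂+1) ℓ (by omega)).trans (htsum.trans ?_)
        have hm0 : (0:ℝ) < (m:ℝ) := by exact_mod_cast hm
        have hks : (k₂star:ℝ) ≤ (ℓ:ℝ) := by exact_mod_cast (by omega : k₂star ≤ ℓ)
        have hnm : (n:ℝ) ≤ (n:ℝ)*(m:ℝ) := le_mul_of_one_le_right hn0.le (by exact_mod_cast hm)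
        exact div_le_div₀ hℓ0 hks hn0 hnm
      have h8 : ((ℓ + 1 - (k₂+1) : ℕ) : ℝ) * (n:ℝ)⁻¹ ≤ (ℓ:ℝ) * (n:ℝ)⁻¹ :=
        mul_le_mul_of_nonneg_right hcard (by positivity)
      have h9 : (ℓ:ℝ)/n + (ℓ:ℝ)*(n:ℝ)⁻¹ = 2*(ℓ:ℝ)/n := by
        rw [div_eq_mul_inv, div_eq_mul_inv]; ring
      linarith
    -- per-term exponent bound
    have hterm : ∀ k ∈ Finset.Icc (k₂+1) ℓ,
        s * (tlam k + (n:ℝ)⁻¹) + 4 * (s * (tlam k + (n:ℝ)⁻¹))^2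
          ≤ (s + 8*s^2*(n:ℝ)⁻¹) * (tlam k + (n:ℝ)⁻¹) := by
      intro k hk
      have h1 := hgamub k (hrange k hk)
      rw [div_eq_mul_inv] at h1
      have h2 := hgam0 k (hrange1 k hk)
      have h3 : 0 ≤ 4*s^2*(tlam k + (n:ℝ)⁻¹) := by positivity
      nlinarith [mul_le_mul_of_nonneg_left h1 h3]
    have hcoef : (0:ℝ) ≤ s + 8*s^2*(n:ℝ)⁻¹ := by positivity
    have hsum_exp : ∑ k ∈ Finset.Icc (k₂+1) ℓ,
        (s * (tlam k + (n:ℝ)⁻¹) + 4 * (s * (tlam k + (n:ℝ)⁻¹))^2)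
          ≤ (s + 8*s^2*(n:ℝ)⁻¹) * (2*(ℓ:ℝ)/n) := by
      calc ∑ k ∈ Finset.Icc (k₂+1) ℓ,
            (s * (tlam k + (n:ℝ)⁻¹) + 4 * (s * (tlam k + (n:ℝ)⁻¹))^2)
          ≤ ∑ k ∈ Finset.Icc (k₂+1) ℓ, (s + 8*s^2*(n:ℝ)⁻¹) * (tlam k + (n:ℝ)⁻¹) :=
            Finset.sum_le_sum hterm
        _ = (s + 8*s^2*(n:ℝ)⁻¹) * ∑ k ∈ Finset.Icc (k₂+1) ℓ, (tlam k + (n:ℝ)⁻¹) :=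
            (Finset.mul_sum _ _ _).symm
        _ ≤ (s + 8*s^2*(n:ℝ)⁻¹) * (2*(ℓ:ℝ)/n) := mul_le_mul_of_nonneg_left hSgam hcoef
    -- numeric conclusion
    have heq : -s*((τ₂-2)/2*((ℓ:ℝ)/n)) + (s + 8*s^2*(n:ℝ)⁻¹)*(2*(ℓ:ℝ)/n)
        = (-(τ₂-2)/2*es + 2*es + 16*es^2)*(ℓ:ℝ) := by
      rw [hsdef]; field_simp; ring
    have hcoef2 : -(τ₂-2)/2*es + 2*es + 16*es^2 ≤ -c₀ := by
      rw [hc₀def, hβdef] at *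
      nlinarith [mul_le_mul_of_nonneg_left hesβ (by positivity : (0:ℝ) ≤ 16*es)]
    calc Real.exp (-s * ((τ₂-2)/2*((ℓ:ℝ)/n)))
          * ∏ k ∈ Finset.Icc (k₂+1) ℓ, mgf (Y k) μ s
        ≤ Real.exp (-s * ((τ₂-2)/2*((ℓ:ℝ)/n)))
          * ∏ k ∈ Finset.Icc (k₂+1) ℓ,
              Real.exp (s * (tlam k + (n:ℝ)⁻¹) + 4 * (s * (tlam k + (n:ℝ)⁻¹))^2) := by
          apply mul_le_mul_of_nonneg_left
            (Finset.prod_le_prod (fun k _ => mgf_nonneg) hmgf) (Real.exp_pos _).le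
      _ = Real.exp (-s * ((τ₂-2)/2*((ℓ:ℝ)/n)) + ∑ k ∈ Finset.Icc (k₂+1) ℓ,
            (s * (tlam k + (n:ℝ)⁻¹) + 4 * (s * (tlam k + (n:ℝ)⁻¹))^2)) := by
          rw [← Real.exp_sum, ← Real.exp_add]
      _ ≤ Real.exp (-c₀ * ℓ) := by
          apply Real.exp_le_exp.mpr
          have h10 : -s*((τ₂-2)/2*((ℓ:ℝ)/n)) + (s + 8*s^2*(n:ℝ)⁻¹)*(2*(ℓ:ℝ)/n) ≤ -c₀*(ℓ:ℝ) := by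
            rw [heq]
            exact mul_le_mul_of_nonneg_right hcoef2 hℓ0
          linarith
  -- final geometric assembly
  set r : ℝ := Real.exp (-c₀) with hrdef
  have hkey2 : ∀ ℓ ∈ Finset.Icc (k₂+1) (Nat.sqrt (n*m)),
      Real.exp (-c₀*(ℓ:ℝ)) = r^(k₂star) * r^(ℓ - k₂star) := by
    intro ℓ hℓ
    have h1 : k₂star ≤ ℓ := by have := (Finset.mem_Icc.mp hℓ).1; omega
    calc Real.exp (-c₀*(ℓ:ℝ)) = r^ℓ := by
          rw [hrdef, ← Real.exp_nat_mul, mul_comm]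
      _ = r^(k₂star) * r^(ℓ-k₂star) := by rw [← pow_add]; congr 1; omega
  calc (∑ ℓ ∈ Finset.Icc (k₂ + 1) (Nat.sqrt (n * m)),
          (μ {ω | (τ₂ - 2) / 2 * ((ℓ : ℝ) / n) <
            ∑ k ∈ Finset.Icc (k₂ + 1) ℓ, (tlam k + (n : ℝ)⁻¹) * (Z k ω) ^ 2}).toReal)
      ≤ ∑ ℓ ∈ Finset.Icc (k₂+1) (Nat.sqrt (n*m)), Real.exp (-c₀*(ℓ:ℝ)) :=
        Finset.sum_le_sum key
    _ = ∑ ℓ ∈ Finset.Icc (k₂+1) (Nat.sqrt (n*m)), r^(k₂star) * r^(ℓ-k₂star) :=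
        Finset.sum_congr rfl hkey2
    _ = r^(k₂star) * ∑ ℓ ∈ Finset.Icc (k₂+1) (Nat.sqrt (n*m)), r^(ℓ-k₂star) :=
        (Finset.mul_sum _ _ _).symm
    _ ≤ r^(k₂star) * (1-r)⁻¹ := by
        apply mul_le_mul_of_nonneg_left ?_ (pow_nonneg hr0.le _)
        have hg := sum_sub_le_tsum (f := fun j => r^j) (fun j => pow_nonneg hr0.le j)
          (summable_geometric_of_lt_one hr0.le hr1) k₂star (k₂+1) (Nat.sqrt (n*m)) (by omega)
        rwa [tsum_geometric_of_lt_one hr0.le hr1] at hg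
    _ ≤ c⁻¹ * Real.exp (-c * k₂star) := by
        have h1 : r^(k₂star) ≤ Real.exp (-c*(k₂star:ℝ)) := by
          rw [hrdef, ← Real.exp_nat_mul]
          apply Real.exp_le_exp.mpr
          have h2 : c ≤ c₀ := min_le_left _ _
          have h3 : (0:ℝ) ≤ (k₂star:ℝ) := Nat.cast_nonneg _
          nlinarith
        have h2 : (1-r)⁻¹ ≤ c⁻¹ := by
          apply inv_anti₀ hc
          exact min_le_right _ _
        calc r^(k₂star) * (1-r)⁻¹
            ≤ Real.exp (-c*(k₂star:ℝ)) * c⁻¹ :=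
              mul_le_mul h1 h2 (inv_nonneg.mpr (by linarith)) (Real.exp_pos _).le
          _ = c⁻¹ * Real.exp (-c * (k₂star:ℝ)) := mul_comm _ _
end
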